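/- Let v, w be unit vectors in ℂ² with 0 < |⟨v,w⟩| < 1, let p_v, p_w be the rank-one projections onto their spans, and for δ ∈ [0,1] let σ_δ = (1−δ)p_v + δ p_w. For any sequence of projections p^{(n)} on (ℂ²)^{⊗n} with p^{(n)} ≥ p_w^{⊗n}, it holds that tr(σ_δ^{⊗n} p^{(n)}) ≥ (δ + (1−δ)|⟨v,w⟩|²)^n ≥ |⟨v,w⟩|^{2n}. In particular liminf_{n→∞} (1/n) log tr(σ_δ^{⊗n} p^{(n)}) ≥ −2 log(1/|⟨v,w⟩|) > −∞, uniformly in δ. -/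

import Mathlib

open Filter
open scoped ComplexOrder Classical

/-- `n`-fold tensor power of a `d×d` matrix, realized on the index set `Fin n → Fin d`. -/
noncomputable def tpow {d : ℕ} (ρ : Matrix (Fin d) (Fin d) ℂ) (n : ℕ) :
    Matrix (Fin n → Fin d) (Fin n → Fin d) ℂ :=
  Matrix.of fun x y => ∏ i, ρ (x i) (y i)

/-- Base-2 functional calculus logarithm of a Hermitian matrix, with the convention
`log 0 = 0` on the kernel (and junk value `0` on non-Hermitian matrices). -/
noncomputable def matLog2 {m : Type*} [Fintype m] [DecidableEq m]
    (ρ : Matrix m m ℂ) : Matrix m m ℂ :=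
  if h : ρ.IsHermitian then
    (h.eigenvectorUnitary : Matrix m m ℂ) *
      Matrix.diagonal (fun i => (Real.logb 2 (h.eigenvalues i) : ℂ)) *
      (star (h.eigenvectorUnitary : Matrix m m ℂ))
  else 0

/-- Quantum relative entropy `S(ρ,σ) = tr ρ (log ρ − log σ)` (base 2); this real-valued
formula is meaningful when `supp ρ ≤ supp σ`. -/
noncomputable def qRelEnt {m : Type*} [Fintype m] [DecidableEq m]
    (ρ σ : Matrix m m ℂ) : ℝ :=
  ((ρ * (matLog2 ρ - matLog2 σ)).trace).re

/-- Support condition `supp ρ ≤ supp σ` (for PSD matrices: `ker σ ⊆ ker ρ`). -/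
def SuppLe {m : Type*} [Fintype m] (ρ σ : Matrix m m ℂ) : Prop :=
  ∀ v, σ.mulVec v = 0 → ρ.mulVec v = 0

/-- Quantum relative entropy with value `⊤` when `supp ρ ≤ supp σ` fails. -/
noncomputable def qRelEntE {m : Type*} [Fintype m] [DecidableEq m]
    (ρ σ : Matrix m m ℂ) : EReal :=
  if SuppLe ρ σ then ((qRelEnt ρ σ : ℝ) : EReal) else ⊤

/-- Von Neumann entropy (base 2). -/
noncomputable def vNent {m : Type*} [Fintype m] [DecidableEq m]
    (ρ : Matrix m m ℂ) : ℝ :=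
  if h : ρ.IsHermitian then -∑ i, (h.eigenvalues i) * Real.logb 2 (h.eigenvalues i) else 0

/-- Density operator. -/
def IsDensity {m : Type*} [Fintype m] (ρ : Matrix m m ℂ) : Prop :=
  ρ.PosSemidef ∧ ρ.trace = 1

/-- Orthogonal projection. -/
def IsProjn {m : Type*} [Fintype m] (p : Matrix m m ℂ) : Prop :=
  p.IsHermitian ∧ p * p = p

/-- Base-2 logarithm with value `⊥` at nonpositive reals. -/
noncomputable def elog2 (t : ℝ) : EReal := if t ≤ 0 then ⊥ else ((Real.logb 2 t : ℝ) : EReal)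

/-- Inner product on `ℂ²` (conjugate-linear in the first argument). -/
noncomputable def ip (v w : Fin 2 → ℂ) : ℂ := ∑ i, (starRingEnd ℂ) (v i) * w i

/-- Rank-one projection onto the span of a unit vector. -/
noncomputable def rk1 (v : Fin 2 → ℂ) : Matrix (Fin 2) (Fin 2) ℂ :=
  Matrix.of fun i j => v i * (starRingEnd ℂ) (v j)

open Matrix

lemma tpow_mul {d n : ℕ} (A B : Matrix (Fin d) (Fin d) ℂ) :
    tpow (A * B) n = tpow A n * tpow B n := by
  ext x y
  simp only [tpow, Matrix.of_apply, Matrix.mul_apply]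
  rw [Finset.prod_univ_sum]
  rw [Fintype.sum_equiv (Equiv.refl _) _ _ (fun z => ?_)]
  · rfl
  · rw [Finset.prod_mul_distrib]
    rfl

lemma tpow_trace {d n : ℕ} (A : Matrix (Fin d) (Fin d) ℂ) :
    (tpow A n).trace = A.trace ^ n := by
  simp only [Matrix.trace, Matrix.diag, tpow, Matrix.of_apply]
  rw [show (∑ x : Fin d, A x x) ^ n = ∏ _i : Fin n, (∑ x : Fin d, A x x) from by
    rw [Finset.prod_const, Finset.card_univ, Fintype.card_fin]]
  rw [Finset.prod_univ_sum]
  rfl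

lemma tpow_conjTranspose {d n : ℕ} (A : Matrix (Fin d) (Fin d) ℂ) :
    tpow Aᴴ n = (tpow A n)ᴴ := by
  ext x y
  simp [tpow, Matrix.conjTranspose_apply, map_prod]

open scoped MatrixOrder in
lemma tpow_posSemidef {d n : ℕ} {A : Matrix (Fin d) (Fin d) ℂ} (hA : A.PosSemidef) :
    (tpow A n).PosSemidef := by
  have h : tpow A n = (tpow (CFC.sqrt A) n)ᴴ * tpow (CFC.sqrt A) n := by
    rw [← tpow_conjTranspose, ← tpow_mul, (CFC.sqrt_nonneg A).posSemidef.1, CFC.sqrt_mul_sqrt_self A hA.nonneg]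
  rw [h]
  exact Matrix.posSemidef_conjTranspose_mul_self _

open scoped MatrixOrder in
lemma psd_trace_re_nonneg {m : Type*} [Fintype m] [DecidableEq m]
    {A B : Matrix m m ℂ} (hA : A.PosSemidef) (hB : B.PosSemidef) :
    0 ≤ ((A * B).trace).re := by
  have h1 : A * B = A * ((CFC.sqrt B) * (CFC.sqrt B)) := by rw [CFC.sqrt_mul_sqrt_self B hB.nonneg]
  have h2 : (A * B).trace = ((CFC.sqrt B) * A * (CFC.sqrt B)).trace := by
    rw [h1, ← Matrix.mul_assoc, Matrix.trace_mul_cycle]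
  have h3 : ((CFC.sqrt B) * A * (CFC.sqrt B)).PosSemidef := by
    have := hA.mul_mul_conjTranspose_same (CFC.sqrt B)
    rwa [(CFC.sqrt_nonneg B).posSemidef.1] at this
  rw [h2]
  have : ∀ i, 0 ≤ (((CFC.sqrt B) * A * (CFC.sqrt B)) i i).re := by
    intro i
    have h4 := h3.re_dotProduct_nonneg (Pi.single i 1)
    simpa [Matrix.mulVec, dotProduct, Pi.single_apply] using h4
  simpa [Matrix.trace, Matrix.diag, Complex.re_sum] using Finset.sum_nonneg fun i _ => this i

lemma trace_rk1_mul (a b : Fin 2 → ℂ) :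
    (rk1 a * rk1 b).trace = ip a b * (starRingEnd ℂ) (ip a b) := by
  simp only [rk1, ip, Matrix.trace, Matrix.diag, Matrix.mul_apply, Matrix.of_apply,
    map_sum, _root_.map_mul, Complex.conj_conj, Finset.sum_mul_sum]
  rw [Finset.sum_comm]
  exact Finset.sum_congr rfl fun i _ => Finset.sum_congr rfl fun j _ => by ring

lemma rk1_psd (a : Fin 2 → ℂ) : (rk1 a).PosSemidef := by
  rw [Matrix.posSemidef_iff_dotProduct_mulVec]
  constructor
  · ext i j
    simp [rk1, Matrix.conjTranspose_apply, mul_comm]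
  · intro x
    have h : dotProduct (star x) ((rk1 a) *ᵥ x) =
        (starRingEnd ℂ) (ip a x) * ip a x := by
      have l : dotProduct (star x) ((rk1 a) *ᵥ x) =
          ∑ i, ∑ j, (starRingEnd ℂ) (x i) * (a i * (starRingEnd ℂ) (a j) * x j) := by
        simp [rk1, Matrix.mulVec, dotProduct, Finset.mul_sum, RCLike.star_def,
          Fin.sum_univ_two]
        ring
      have r : (starRingEnd ℂ) (ip a x) * ip a x =
          ∑ i, ∑ j, ((starRingEnd ℂ) ((starRingEnd ℂ) (a i) * x i) * ((starRingEnd ℂ) (a j) * x j)) := by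
        simp [ip, map_sum, Finset.sum_mul_sum, Fin.sum_univ_two, _root_.map_mul,
          Complex.conj_conj]
        ring
      rw [l, r]
      exact Finset.sum_congr rfl fun i _ => Finset.sum_congr rfl fun j _ => by
        simp [_root_.map_mul, Complex.conj_conj]; ring
    rw [h, mul_comm, Complex.mul_conj]
    exact Complex.zero_le_real.mpr (Complex.normSq_nonneg _)

lemma sigma_psd (v w : Fin 2 → ℂ) (δ : ℝ) (hδ0 : 0 ≤ δ) (hδ1 : δ ≤ 1) :
    ((1 - (δ : ℂ)) • rk1 v + (δ : ℂ) • rk1 w).PosSemidef := by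
  have h1 : (0:ℂ) ≤ (1 - (δ:ℂ)) := by
    rw [show (1 - (δ:ℂ)) = ((1 - δ : ℝ) : ℂ) by push_cast; ring]
    exact Complex.zero_le_real.mpr (by linarith)
  have h2 : (0:ℂ) ≤ (δ:ℂ) := Complex.zero_le_real.mpr hδ0
  have hv := rk1_psd v
  have hw := rk1_psd w
  rw [Matrix.posSemidef_iff_dotProduct_mulVec]
  constructor
  · ext i j
    simp only [Matrix.conjTranspose_apply, Matrix.add_apply, Matrix.smul_apply, rk1,
      Matrix.of_apply, star_add, star_mul', smul_eq_mul, _root_.map_mul, map_sub, _root_.map_one,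
      Complex.conj_conj, Complex.conj_ofReal, RCLike.star_def]
    ring
  · intro x
    rw [Matrix.add_mulVec, Matrix.smul_mulVec, Matrix.smul_mulVec,
      dotProduct_add, dotProduct_smul, dotProduct_smul]
    exact add_nonneg (mul_nonneg h1 (hv.dotProduct_mulVec_nonneg x)) (mul_nonneg h2 (hw.dotProduct_mulVec_nonneg x))

lemma trace_sigma_rk1 (v w : Fin 2 → ℂ) (hw : ip w w = 1) (δ : ℝ) :
    (((1 - (δ : ℂ)) • rk1 v + (δ : ℂ) • rk1 w) * rk1 w).trace =
      ((δ + (1 - δ) * (‖ip v w‖) ^ 2 : ℝ) : ℂ) := by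
  rw [Matrix.add_mul, Matrix.smul_mul, Matrix.smul_mul, Matrix.trace_add, Matrix.trace_smul,
    Matrix.trace_smul, trace_rk1_mul, trace_rk1_mul, hw, Complex.mul_conj, Complex.mul_conj,
    Complex.normSq_eq_norm_sq]
  push_cast
  simp
  ring

/-- Empirical-state typical projectors cannot beat the overlap rate: if `p⁽ⁿ⁾ ≥ p_w^{⊗n}`,
then `tr(σ_δ^{⊗n} p⁽ⁿ⁾) ≥ (δ + (1−δ)|⟨v,w⟩|²)ⁿ ≥ |⟨v,w⟩|^{2n}`, so the separation
exponent is bounded below by `−2 log(1/|⟨v,w⟩|) > −∞`, uniformly in `δ`. -/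
theorem empirical_state_separation_bounded (v w : Fin 2 → ℂ)
    (hv : ip v v = 1) (hw : ip w w = 1)
    (h0 : 0 < ‖ip v w‖) (h1 : ‖ip v w‖ < 1)
    (δ : ℝ) (hδ0 : 0 ≤ δ) (hδ1 : δ ≤ 1)
    (p : (n : ℕ) → Matrix (Fin n → Fin 2) (Fin n → Fin 2) ℂ)
    (hp : ∀ n, IsProjn (p n))
    (hdom : ∀ n, (p n - tpow (rk1 w) n).PosSemidef) :
    (∀ n : ℕ,
      (δ + (1 - δ) * (‖ip v w‖) ^ 2) ^ n ≤
          ((tpow ((1 - (δ : ℂ)) • rk1 v + (δ : ℂ) • rk1 w) n * p n).trace).re ∧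
      (‖ip v w‖) ^ (2 * n) ≤ (δ + (1 - δ) * (‖ip v w‖) ^ 2) ^ n) ∧
    ((-(2 * Real.logb 2 (1 / ‖ip v w‖)) : ℝ) : EReal) ≤
        Filter.liminf (fun n : ℕ =>
          elog2 (((tpow ((1 - (δ : ℂ)) • rk1 v + (δ : ℂ) • rk1 w) n * p n).trace).re) *
            (((n : ℝ)⁻¹ : ℝ) : EReal)) atTop ∧
    (⊥ : EReal) <
        Filter.liminf (fun n : ℕ =>
          elog2 (((tpow ((1 - (δ : ℂ)) • rk1 v + (δ : ℂ) • rk1 w) n * p n).trace).re) *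
            (((n : ℝ)⁻¹ : ℝ) : EReal)) atTop := by

  classical
  set c := ‖ip v w‖ with hc
  set r := δ + (1 - δ) * c ^ 2 with hr
  set σ := (1 - (δ : ℂ)) • rk1 v + (δ : ℂ) • rk1 w with hσdef
  have hcpos : 0 < c := h0
  have hc2pos : 0 < c ^ 2 := by positivity
  have hc2le1 : c ^ 2 ≤ 1 := by nlinarith
  have hrc : c ^ 2 ≤ r := by rw [hr]; nlinarith
  have hrpos : 0 < r := lt_of_lt_of_le hc2pos hrc
  have hσpsd : σ.PosSemidef := sigma_psd v w δ hδ0 hδ1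
  have htr : ∀ n : ℕ, r ^ n ≤ ((tpow σ n * p n).trace).re := by
    intro n
    have hQ : (tpow σ n * tpow (rk1 w) n).trace = ((r : ℂ)) ^ n := by
      rw [← tpow_mul, tpow_trace, trace_sigma_rk1 v w hw δ]
    have hsplit : (tpow σ n * p n).trace =
        (tpow σ n * (p n - tpow (rk1 w) n)).trace + (tpow σ n * tpow (rk1 w) n).trace := by
      rw [Matrix.mul_sub, Matrix.trace_sub]; ring
    have h1' : 0 ≤ ((tpow σ n * (p n - tpow (rk1 w) n)).trace).re :=
      psd_trace_re_nonneg (tpow_posSemidef hσpsd) (hdom n)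
    have h2' : ((tpow σ n * tpow (rk1 w) n).trace).re = r ^ n := by
      rw [hQ, ← Complex.ofReal_pow, Complex.ofReal_re]
    rw [hsplit, Complex.add_re, h2']
    linarith
  have hpow : ∀ n : ℕ, c ^ (2 * n) ≤ r ^ n := by
    intro n
    rw [pow_mul]
    exact pow_le_pow_left₀ (by positivity) hrc n
  have hKey : ∀ᶠ n : ℕ in atTop,
      ((-(2 * Real.logb 2 (1 / c)) : ℝ) : EReal) ≤
        elog2 (((tpow σ n * p n).trace).re) * (((n : ℝ)⁻¹ : ℝ) : EReal) := by
    filter_upwards [eventually_ge_atTop 1] with n hn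
    set t := ((tpow σ n * p n).trace).re with ht
    have htpos : 0 < t := lt_of_lt_of_le (by positivity) (le_trans (hpow n) (htr n))
    have hel : elog2 t = ((Real.logb 2 t : ℝ) : EReal) := by
      rw [elog2, if_neg (not_le.mpr htpos)]
    rw [hel, ← EReal.coe_mul, EReal.coe_le_coe_iff]
    have hnpos : (0:ℝ) < (n : ℝ) := by exact_mod_cast hn
    have hlb : ((2 * n : ℕ) : ℝ) * Real.logb 2 c ≤ Real.logb 2 t := by
      rw [← Real.logb_pow]
      exact Real.logb_le_logb_of_le one_lt_two (by positivity)
        (le_trans (hpow n) (htr n))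
    have hmul : Real.logb 2 t * (n : ℝ)⁻¹ ≥
        (((2 * n : ℕ) : ℝ) * Real.logb 2 c) * (n : ℝ)⁻¹ :=
      mul_le_mul_of_nonneg_right hlb (by positivity)
    have heq : (((2 * n : ℕ) : ℝ) * Real.logb 2 c) * (n : ℝ)⁻¹ = 2 * Real.logb 2 c := by
      push_cast
      field_simp
    have hK : -(2 * Real.logb 2 (1 / c)) = 2 * Real.logb 2 c := by
      rw [one_div, Real.logb_inv]; ring
    rw [hK]
    linarith [heq ▸ hmul]
  have hlim := le_liminf_of_le (by isBoundedDefault) hKey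
  exact ⟨fun n => ⟨htr n, hpow n⟩, hlim, lt_of_lt_of_le (EReal.bot_lt_coe _) hlim⟩
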